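/- For three non-collinear points a, b, c ∈ ℝ², the minimum width of a strip containing {a, b, c} equals the smallest of the three heights of the triangle abc, i.e., it equals min{dist(a, line(b,c)), dist(b, line(a,c)), dist(c, line(a,b))}. -/

import Mathlib

open Set Metric

noncomputable section

/-- Points of the plane. -/
abbrev Pt : Type := EuclideanSpace ℝ (Fin 2)

/-- The real inner product of two vectors of the plane. -/
def iprod (p q : Pt) : ℝ := inner ℝ p q

/-- The ray emanating from `p` in direction `u`. -/
def ray (p u : Pt) : Set Pt := {q | ∃ t : ℝ, 0 ≤ t ∧ q = p + t • u}

/-- The line through `p` with direction `u`. -/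
def lineThrough (p u : Pt) : Set Pt := {q | ∃ t : ℝ, q = p + t • u}

/-- A V-shape: two vertices `x ≠ y` and two nonzero direction vectors `u₁, u₂` lying in
opposite closed half-planes determined by the direction `y - x` (witnessed by a unit
normal `n` of `y - x` with `⟪u₁, n⟫ ≥ 0 ≥ ⟪u₂, n⟫`). -/
structure VShape where
  x : Pt
  y : Pt
  u₁ : Pt
  u₂ : Pt
  n : Pt
  hxy : x ≠ y
  hu₁ : u₁ ≠ 0
  hu₂ : u₂ ≠ 0
  hn : ‖n‖ = 1
  hperp : iprod (y - x) n = 0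
  hside₁ : 0 ≤ iprod u₁ n
  hside₂ : iprod u₂ n ≤ 0

namespace VShape

/-- Direction of the `i`-th arm (`i = 0, 1` standing for `1, 2`). -/
def dir (V : VShape) : Fin 2 → Pt := ![V.u₁, V.u₂]

/-- The `i`-th arm: convex hull of the two parallel rays `Xᵢ` (from `x`) and `Yᵢ` (from `y`). -/
def arm (V : VShape) (i : Fin 2) : Set Pt :=
  convexHull ℝ (ray V.x (V.dir i) ∪ ray V.y (V.dir i))

/-- The V-shape as a subset of the plane: the union of its two arms. -/
def carrier (V : VShape) : Set Pt := V.arm 0 ∪ V.arm 1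

/-- The `i`-th strip: the closed region between the parallel lines `x + ℝ•uᵢ` and `y + ℝ•uᵢ`. -/
def strip (V : VShape) (i : Fin 2) : Set Pt :=
  convexHull ℝ (lineThrough V.x (V.dir i) ∪ lineThrough V.y (V.dir i))

/-- Width of the `i`-th arm: the distance between the two parallel boundary lines. -/
def armWidth (V : VShape) (i : Fin 2) : ℝ :=
  Metric.infDist V.x (lineThrough V.y (V.dir i))

/-- Width of a V-shape: the larger of the two arm widths. -/
def width (V : VShape) : ℝ := max (V.armWidth 0) (V.armWidth 1)

/-- A V-shape covers a set `P` if `P` is contained in it. -/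
def covers (V : VShape) (P : Set Pt) : Prop := P ⊆ V.carrier

end VShape

/-- `S` is a closed strip of width `w`: the closed region between two parallel lines at
distance `w`, described by a unit normal vector `v` and an offset `c`. -/
def IsStrip (S : Set Pt) (w : ℝ) : Prop :=
  0 ≤ w ∧ ∃ (v : Pt) (c : ℝ), ‖v‖ = 1 ∧ S = {p | c ≤ iprod p v ∧ iprod p v ≤ c + w}


-- auxiliary lemmas

lemma iprod_coords (p q : Pt) : iprod p q = p 0 * q 0 + p 1 * q 1 := by
  simp [iprod, PiLp.inner_apply, RCLike.inner_apply, Fin.sum_univ_two]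
  ring

lemma iprod_sub_left (x y v : Pt) : iprod (x - y) v = iprod x v - iprod y v := by
  simp [iprod, inner_sub_left]

lemma norm_sq_coords (p : Pt) : ‖p‖^2 = p 0^2 + p 1^2 := by
  rw [← real_inner_self_eq_norm_sq]
  rw [show (inner ℝ p p : ℝ) = iprod p p from rfl, iprod_coords]; ring

lemma le_infDist' {x : Pt} {s : Set Pt} (hs : s.Nonempty) {b : ℝ} (h : ∀ y ∈ s, b ≤ dist x y) :
    b ≤ Metric.infDist x s := by
  by_contra hb; push_neg at hb
  obtain ⟨y, hy, hlt⟩ := (Metric.infDist_lt_iff hs).1 hb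
  exact absurd (h y hy) (not_le.2 hlt)

lemma le_of_sq_le {a b : ℝ} (hb : 0 ≤ b) (h : a^2 ≤ b^2) (ha : 0 ≤ a) : a ≤ b := by nlinarith

lemma eq_of_sq_eq {a b : ℝ} (ha : 0 ≤ a) (hb : 0 ≤ b) (h : a^2 = b^2) : a = b := by nlinarith

lemma pt_ext {p q : Pt} (h0 : p 0 = q 0) (h1 : p 1 = q 1) : p = q := by
  apply PiLp.ext; intro i; fin_cases i <;> assumption

lemma pt_ne_zero {u : Pt} (hu : u ≠ 0) : u 0 ≠ 0 ∨ u 1 ≠ 0 := by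
  by_contra hc; push_neg at hc
  exact hu (pt_ext (by simpa using hc.1) (by simpa using hc.2))

lemma normsq_pos {u : Pt} (hu : u ≠ 0) : 0 < u 0 ^ 2 + u 1 ^ 2 := by
  rcases pt_ne_zero hu with h | h <;> positivity

lemma infDist_line (p q u : Pt) (hu : u ≠ 0) :
    Metric.infDist p (lineThrough q u)
      = |(p 0 - q 0) * u 1 - (p 1 - q 1) * u 0| / ‖u‖ := by
  have hU : 0 < u 0 ^ 2 + u 1 ^ 2 := normsq_pos hu
  have hnu : 0 < ‖u‖ := norm_pos_iff.2 hu
  have hnsq : ‖u‖ ^ 2 = u 0 ^ 2 + u 1 ^ 2 := norm_sq_coords u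
  set D : ℝ := (p 0 - q 0) * u 1 - (p 1 - q 1) * u 0 with hD
  have hdsq : ∀ t : ℝ, dist p (q + t • u) ^ 2
      = (p 0 - q 0 - t * u 0) ^ 2 + (p 1 - q 1 - t * u 1) ^ 2 := by
    intro t
    rw [dist_eq_norm, norm_sq_coords]
    have h0 : (p - (q + t • u)) 0 = p 0 - q 0 - t * u 0 := by
      show p 0 - (q 0 + t * u 0) = _; ring
    have h1 : (p - (q + t • u)) 1 = p 1 - q 1 - t * u 1 := by
      show p 1 - (q 1 + t * u 1) = _; ring
    rw [h0, h1]
  apply le_antisymm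
  · set t : ℝ := ((p 0 - q 0) * u 0 + (p 1 - q 1) * u 1) / (u 0 ^ 2 + u 1 ^ 2) with ht
    have hmem : q + t • u ∈ lineThrough q u := ⟨t, rfl⟩
    refine le_trans (Metric.infDist_le_dist_of_mem hmem) (le_of_eq ?_)
    apply eq_of_sq_eq dist_nonneg (by positivity)
    rw [hdsq t, div_pow, hnsq, ht]
    field_simp
    rw [sq_abs, hD]
    ring
  · apply le_infDist' (s := lineThrough q u) ⟨q + (0:ℝ) • u, ⟨0, rfl⟩⟩
    rintro y ⟨t, rfl⟩
    apply le_of_sq_le dist_nonneg _ (by positivity)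
    rw [hdsq t, div_pow, hnsq, div_le_iff₀ hU, sq_abs, hD]
    nlinarith [sq_nonneg ((p 0 - q 0 - t * u 0) * u 0 + (p 1 - q 1 - t * u 1) * u 1)]

lemma key_ineq (x y v : Pt) (w : ℝ) (hv : ‖v‖ = 1)
    (hmid : iprod x v * iprod y v ≤ 0)
    (hw : |iprod x v - iprod y v| ≤ w) :
    |x 0 * y 1 - x 1 * y 0| ≤ w * max ‖x‖ ‖y‖ := by
  have hv2 : v 0^2 + v 1^2 = 1 := by rw [← norm_sq_coords, hv]; norm_num
  set S1 := iprod x v with hS1d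
  set S2 := iprod y v with hS2d
  set σ1 : ℝ := x 1 * v 0 - x 0 * v 1 with hσ1
  set σ2 : ℝ := y 1 * v 0 - y 0 * v 1 with hσ2
  have hS1 : S1 = x 0 * v 0 + x 1 * v 1 := iprod_coords x v
  have hS2 : S2 = y 0 * v 0 + y 1 * v 1 := iprod_coords y v
  have hdet : x 0 * y 1 - x 1 * y 0 = S1 * σ2 - S2 * σ1 := by
    rw [hS1, hS2, hσ1, hσ2]
    linear_combination -(x 0 * y 1 - x 1 * y 0) * hv2
  have habs1 : |σ1| ≤ ‖x‖ := by
    apply le_of_sq_le (norm_nonneg x) _ (abs_nonneg _)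
    rw [sq_abs, norm_sq_coords]
    have id1 : σ1^2 + (x 0 * v 0 + x 1 * v 1)^2 = x 0^2 + x 1^2 := by
      rw [hσ1]; linear_combination (x 0^2 + x 1^2) * hv2
    nlinarith [sq_nonneg (x 0 * v 0 + x 1 * v 1)]
  have habs2 : |σ2| ≤ ‖y‖ := by
    apply le_of_sq_le (norm_nonneg y) _ (abs_nonneg _)
    rw [sq_abs, norm_sq_coords]
    have id2 : σ2^2 + (y 0 * v 0 + y 1 * v 1)^2 = y 0^2 + y 1^2 := by
      rw [hσ2]; linear_combination (y 0^2 + y 1^2) * hv2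
    nlinarith [sq_nonneg (y 0 * v 0 + y 1 * v 1)]
  have hw0 : 0 ≤ w := le_trans (abs_nonneg _) hw
  have hsum : |S1| + |S2| ≤ w := by
    have e : |S1| * |S2| = -(S1 * S2) := by rw [← abs_mul, abs_of_nonpos hmid]
    have e2 : (S1 - S2)^2 ≤ w^2 := by
      nlinarith [sq_abs (S1 - S2), abs_nonneg (S1 - S2)]
    have h1 : (|S1| + |S2|)^2 ≤ w^2 := by nlinarith [sq_abs S1, sq_abs S2]
    exact le_of_sq_le hw0 h1 (by positivity)
  set M := max ‖x‖ ‖y‖ with hMd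
  have hM1 : |σ1| ≤ M := le_trans habs1 (le_max_left _ _)
  have hM2 : |σ2| ≤ M := le_trans habs2 (le_max_right _ _)
  have hM0 : 0 ≤ M := le_trans (abs_nonneg σ1) hM1
  calc |x 0 * y 1 - x 1 * y 0| = |S1 * σ2 - S2 * σ1| := by rw [hdet]
    _ ≤ |S1 * σ2| + |S2 * σ1| := abs_sub _ _
    _ = |S1| * |σ2| + |S2| * |σ1| := by rw [abs_mul, abs_mul]
    _ ≤ |S1| * M + |S2| * M := by
        exact add_le_add (mul_le_mul_of_nonneg_left hM2 (abs_nonneg _))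
          (mul_le_mul_of_nonneg_left hM1 (abs_nonneg _))
    _ = (|S1| + |S2|) * M := by ring
    _ ≤ w * M := mul_le_mul_of_nonneg_right hsum hM0

lemma collinear_of_det (a b c : Pt)
    (h : (b 0 - a 0) * (c 1 - a 1) - (b 1 - a 1) * (c 0 - a 0) = 0) :
    Collinear ℝ ({a, b, c} : Set Pt) := by
  rcases eq_or_ne b a with hba | hba
  · have hs : ({a, b, c} : Set Pt) = {a, c} := by rw [hba, Set.insert_idem]
    rw [hs]; exact collinear_pair ℝ a c
  · have hx : b - a ≠ 0 := sub_ne_zero.2 hba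
    apply (collinear_iff_of_mem (Set.mem_insert a _)).2
    refine ⟨b - a, ?_⟩
    intro p hp
    simp only [Set.mem_insert_iff, Set.mem_singleton_iff] at hp
    rcases hp with rfl | rfl | hc
    · exact ⟨0, by simp⟩
    · exact ⟨1, by simp⟩
    · subst hc
      have hb0 : (b - a) 0 = b 0 - a 0 := rfl
      have hb1 : (b - a) 1 = b 1 - a 1 := rfl
      rcases pt_ne_zero hx with h0 | h1
      · rw [hb0] at h0
        refine ⟨(p 0 - a 0) / (b 0 - a 0), ?_⟩
        apply pt_ext
        · show p 0 = (p 0 - a 0) / (b 0 - a 0) * (b 0 - a 0) + a 0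
          field_simp
          ring
        · show p 1 = (p 0 - a 0) / (b 0 - a 0) * (b 1 - a 1) + a 1
          field_simp
          first | linear_combination h | linear_combination -h
      · rw [hb1] at h1
        refine ⟨(p 1 - a 1) / (b 1 - a 1), ?_⟩
        apply pt_ext
        · show p 0 = (p 1 - a 1) / (b 1 - a 1) * (b 0 - a 0) + a 0
          field_simp
          first | linear_combination h | linear_combination -h
        · show p 1 = (p 1 - a 1) / (b 1 - a 1) * (b 1 - a 1) + a 1
          field_simp
          ring

noncomputable def mk2 (x y : ℝ) : Pt := (WithLp.equiv 2 (Fin 2 → ℝ)).symm ![x, y]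

lemma exists_strip (p q r : Pt) (hqr : q ≠ r) :
    ∃ S : Set Pt, IsStrip S (Metric.infDist p (lineThrough q (r - q))) ∧ p ∈ S ∧ q ∈ S ∧ r ∈ S := by
  have hu : r - q ≠ 0 := sub_ne_zero.2 (Ne.symm hqr)
  set u : Pt := r - q with hud
  have hnu : 0 < ‖u‖ := norm_pos_iff.2 hu
  set n : Pt := ‖u‖⁻¹ • mk2 (u 1) (-(u 0)) with hnd
  have hn0 : n 0 = ‖u‖⁻¹ * u 1 := rfl
  have hn1 : n 1 = ‖u‖⁻¹ * (-(u 0)) := rfl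
  have hnn : ‖n‖ = 1 := by
    have hm : ‖mk2 (u 1) (-(u 0))‖ = ‖u‖ := by
      apply eq_of_sq_eq (norm_nonneg _) (norm_nonneg _)
      rw [norm_sq_coords, norm_sq_coords]
      show (u 1)^2 + (-(u 0))^2 = _; ring
    rw [hnd, norm_smul, hm, norm_inv, norm_norm, inv_mul_cancel₀ (ne_of_gt hnu)]
  set tp := iprod p n with htpd
  set tq := iprod q n with htqd
  have hu0 : u 0 = r 0 - q 0 := rfl
  have hu1 : u 1 = r 1 - q 1 := rfl
  have htr : iprod r n = tq := by
    rw [htqd, iprod_coords, iprod_coords, hn0, hn1, hu0, hu1]; ring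
  have hdiff : tp - tq = ((p 0 - q 0) * u 1 - (p 1 - q 1) * u 0) * ‖u‖⁻¹ := by
    rw [htpd, htqd, iprod_coords, iprod_coords, hn0, hn1]; ring
  have hwidth : Metric.infDist p (lineThrough q u) = |tp - tq| := by
    rw [infDist_line p q u hu, hdiff, abs_mul, abs_inv, abs_norm, div_eq_mul_inv]
  refine ⟨{z | min tq tp ≤ iprod z n ∧ iprod z n ≤ min tq tp + |tp - tq|}, ?_, ?_, ?_, ?_⟩
  · refine ⟨Metric.infDist_nonneg, n, min tq tp, hnn, ?_⟩
    rw [hwidth]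
  · refine ⟨min_le_right _ _, ?_⟩
    rcases le_total tq tp with h | h
    · rw [min_eq_left h]; linarith [le_abs_self (tp - tq)]
    · rw [min_eq_right h]; linarith [abs_nonneg (tp - tq)]
  · refine ⟨min_le_left _ _, ?_⟩
    rcases le_total tq tp with h | h
    · rw [min_eq_left h]; linarith [abs_nonneg (tp - tq)]
    · rw [min_eq_right h]; linarith [neg_abs_le (tp - tq)]
  · show min tq tp ≤ iprod r n ∧ iprod r n ≤ min tq tp + |tp - tq|
    rw [htr]
    refine ⟨min_le_left _ _, ?_⟩
    rcases le_total tq tp with h | h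
    · rw [min_eq_left h]; linarith [abs_nonneg (tp - tq)]
    · rw [min_eq_right h]; linarith [neg_abs_le (tp - tq)]

lemma middle (x y z : ℝ) :
    (y - x) * (z - x) ≤ 0 ∨ (x - y) * (z - y) ≤ 0 ∨ (x - z) * (y - z) ≤ 0 := by
  rcases le_total x y with h1 | h1 <;> rcases le_total y z with h2 | h2 <;>
    rcases le_total x z with h3 | h3 <;>
    first
      | (left; nlinarith)
      | (right; left; nlinarith)
      | (right; right; nlinarith)

/-- The minimum width of a strip containing three non-collinear points is
the smallest of the three heights of the triangle they form. -/
theorem statement11 (a b c : Pt) (h : ¬ Collinear ℝ ({a, b, c} : Set Pt)) :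
    IsLeast {w : ℝ | ∃ S : Set Pt, IsStrip S w ∧ ({a, b, c} : Set Pt) ⊆ S}
      (min (Metric.infDist a (lineThrough b (c - b)))
        (min (Metric.infDist b (lineThrough a (c - a)))
          (Metric.infDist c (lineThrough a (b - a))))) := by
  set Det : ℝ := (b 0 - a 0) * (c 1 - a 1) - (b 1 - a 1) * (c 0 - a 0) with hDet
  have hD : Det ≠ 0 := fun h0 => h (collinear_of_det a b c h0)
  have hab : a ≠ b := by rintro rfl; exact hD (by rw [hDet]; ring)
  have hac : a ≠ c := by rintro rfl; exact hD (by rw [hDet]; ring)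
  have hbc : b ≠ c := by rintro rfl; exact hD (by rw [hDet]; ring)
  have hcb : (0:ℝ) < ‖c - b‖ := norm_pos_iff.2 (sub_ne_zero.2 (Ne.symm hbc))
  have hca : (0:ℝ) < ‖c - a‖ := norm_pos_iff.2 (sub_ne_zero.2 (Ne.symm hac))
  have hba : (0:ℝ) < ‖b - a‖ := norm_pos_iff.2 (sub_ne_zero.2 (Ne.symm hab))
  set dA := Metric.infDist a (lineThrough b (c - b)) with hdA
  set dB := Metric.infDist b (lineThrough a (c - a)) with hdB
  set dC := Metric.infDist c (lineThrough a (b - a)) with hdC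
  have hdAe : dA = |Det| / ‖c - b‖ := by
    rw [hdA, infDist_line a b (c - b) (sub_ne_zero.2 (Ne.symm hbc))]
    congr 1
    rw [show (a 0 - b 0) * ((c - b) 1) - (a 1 - b 1) * ((c - b) 0) = -Det by
      show (a 0 - b 0) * (c 1 - b 1) - (a 1 - b 1) * (c 0 - b 0) = -Det
      rw [hDet]; ring, abs_neg]
  have hdBe : dB = |Det| / ‖c - a‖ := by
    rw [hdB, infDist_line b a (c - a) (sub_ne_zero.2 (Ne.symm hac)), hDet]
    rfl
  have hdCe : dC = |Det| / ‖b - a‖ := by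
    rw [hdC, infDist_line c a (b - a) (sub_ne_zero.2 (Ne.symm hab))]
    congr 1
    rw [show (c 0 - a 0) * ((b - a) 1) - (c 1 - a 1) * ((b - a) 0) = -Det by
      show (c 0 - a 0) * (b 1 - a 1) - (c 1 - a 1) * (b 0 - a 0) = -Det
      rw [hDet]; ring, abs_neg]
  constructor
  · -- membership
    show ∃ S : Set Pt, IsStrip S (min dA (min dB dC)) ∧ ({a, b, c} : Set Pt) ⊆ S
    have hsub : ∀ S : Set Pt, a ∈ S → b ∈ S → c ∈ S → ({a, b, c} : Set Pt) ⊆ S := by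
      intro S h1 h2 h3 z hz
      simp only [Set.mem_insert_iff, Set.mem_singleton_iff] at hz
      rcases hz with rfl | rfl | rfl <;> assumption
    rcases le_total dA (min dB dC) with hm | hm
    · rw [min_eq_left hm]
      obtain ⟨S, hS, h1, h2, h3⟩ := exists_strip a b c hbc
      exact ⟨S, hS, hsub S h1 h2 h3⟩
    · rw [min_eq_right hm]
      rcases le_total dB dC with hm2 | hm2
      · rw [min_eq_left hm2]
        obtain ⟨S, hS, h1, h2, h3⟩ := exists_strip b a c hac
        exact ⟨S, hS, hsub S h2 h1 h3⟩
      · rw [min_eq_right hm2]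
        obtain ⟨S, hS, h1, h2, h3⟩ := exists_strip c a b hab
        exact ⟨S, hS, hsub S h2 h3 h1⟩
  · -- lower bound
    rintro w ⟨S, ⟨hw0, v, c₀, hv, rfl⟩, hsubset⟩
    have hma : a ∈ {p : Pt | c₀ ≤ iprod p v ∧ iprod p v ≤ c₀ + w} :=
      hsubset (Set.mem_insert a _)
    have hmb : b ∈ {p : Pt | c₀ ≤ iprod p v ∧ iprod p v ≤ c₀ + w} :=
      hsubset (Set.mem_insert_of_mem _ (Set.mem_insert b _))
    have hmc : c ∈ {p : Pt | c₀ ≤ iprod p v ∧ iprod p v ≤ c₀ + w} :=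
      hsubset (Set.mem_insert_of_mem _ (Set.mem_insert_of_mem _ rfl))
    obtain ⟨ha1, ha2⟩ := hma
    obtain ⟨hb1, hb2⟩ := hmb
    obtain ⟨hc1, hc2⟩ := hmc
    have hmA : min dA (min dB dC) ≤ dA := min_le_left _ _
    have hmB : min dA (min dB dC) ≤ dB := le_trans (min_le_right _ _) (min_le_left _ _)
    have hmC : min dA (min dB dC) ≤ dC := le_trans (min_le_right _ _) (min_le_right _ _)
    rcases middle (iprod a v) (iprod b v) (iprod c v) with hm | hm | hm
    · -- a middle
      have hk := key_ineq (b - a) (c - a) v w hv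
        (by rw [iprod_sub_left, iprod_sub_left]; exact hm)
        (by rw [iprod_sub_left, iprod_sub_left]
            rw [abs_le]; constructor <;> linarith)
      have hk' : |Det| ≤ w * max ‖b - a‖ ‖c - a‖ := hk
      rcases le_total ‖b - a‖ ‖c - a‖ with hM | hM
      · rw [max_eq_right hM] at hk'
        refine le_trans hmB ?_
        rw [hdBe, div_le_iff₀ hca]; linarith
      · rw [max_eq_left hM] at hk'
        refine le_trans hmC ?_
        rw [hdCe, div_le_iff₀ hba]; linarith
    · -- b middle
      have hk := key_ineq (a - b) (c - b) v w hv
        (by rw [iprod_sub_left, iprod_sub_left]; exact hm)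
        (by rw [iprod_sub_left, iprod_sub_left]
            rw [abs_le]; constructor <;> linarith)
      have hk' : |Det| ≤ w * max ‖a - b‖ ‖c - b‖ := by
        have : (a - b) 0 * ((c - b) 1) - (a - b) 1 * ((c - b) 0) = -Det := by
          show (a 0 - b 0) * (c 1 - b 1) - (a 1 - b 1) * (c 0 - b 0) = -Det
          rw [hDet]; ring
        rw [this, abs_neg] at hk
        exact hk
      rcases le_total ‖a - b‖ ‖c - b‖ with hM | hM
      · rw [max_eq_right hM] at hk'
        refine le_trans hmA ?_
        rw [hdAe, div_le_iff₀ hcb]; linarith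
      · rw [max_eq_left hM] at hk'
        rw [norm_sub_rev] at hk'
        refine le_trans hmC ?_
        rw [hdCe, div_le_iff₀ hba]; linarith
    · -- c middle
      have hk := key_ineq (a - c) (b - c) v w hv
        (by rw [iprod_sub_left, iprod_sub_left]; exact hm)
        (by rw [iprod_sub_left, iprod_sub_left]
            rw [abs_le]; constructor <;> linarith)
      have hk' : |Det| ≤ w * max ‖a - c‖ ‖b - c‖ := by
        have : (a - c) 0 * ((b - c) 1) - (a - c) 1 * ((b - c) 0) = Det := by
          show (a 0 - c 0) * (b 1 - c 1) - (a 1 - c 1) * (b 0 - c 0) = Det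
          rw [hDet]; ring
        rw [this] at hk
        exact hk
      rcases le_total ‖a - c‖ ‖b - c‖ with hM | hM
      · rw [max_eq_right hM, norm_sub_rev] at hk'
        refine le_trans hmA ?_
        rw [hdAe, div_le_iff₀ hcb]; linarith
      · rw [max_eq_left hM, norm_sub_rev] at hk'
        refine le_trans hmB ?_
        rw [hdBe, div_le_iff₀ hca]; linarith
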